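/- Let t be a g-term, p ∈ valid(t), and suppose t[p] is closed. Then for all g-terms r and substitution lists σ (satisfying the algorithm's preconditions: r is closed, tσ is closed, and t occurs at a position of SCC(r) in r): globalize(t)[p] = globalize_scc(r, σ, t)[p] = globalize_step(r, σ, t)[p] = globalize(t[p]). -/
import Mathlib


namespace HashAlpha

/-- g-terms: λ-terms with de Bruijn indices, extended with global variables `gvar t`. -/
inductive GTerm : Type
  | var : ℕ → GTerm
  | app : GTerm → GTerm → GTerm
  | lam : GTerm → GTerm
  | gvar : GTerm → GTerm
  deriving DecidableEq

/-- A g-term is a pure λ-term if it contains no global variables. -/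
def GTerm.IsPure : GTerm → Prop
  | .var _ => True
  | .app a b => a.IsPure ∧ b.IsPure
  | .lam a => a.IsPure
  | .gvar _ => False

/-- Directions for term positions: ↓, ↙, ↘. -/
inductive Dir : Type
  | down | left | right
  deriving DecidableEq

/-- A term position is a word over {↓, ↙, ↘}. -/
abbrev Pos := List Dir

/-- `|p|_λ`: the number of ↓'s in a position. -/
def lamDepth (p : Pos) : ℕ := p.count Dir.down

/-- Term indexing `t[p]` (partial; does not descend into global variables). -/
def GTerm.index : GTerm → Pos → Option GTerm
  | t, [] => some t
  | .app a _, .left :: p => a.index p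
  | .app _ b, .right :: p => b.index p
  | .lam a, .down :: p => a.index p
  | _, _ => none

/-- `valid(t)`: the set of positions where `t[p]` is defined. -/
def Valid (t : GTerm) : Set Pos := {p | (t.index p).isSome}

/-- `vars(t)`: positions of variables. -/
def Vars (t : GTerm) : Set Pos := {p | ∃ i, t.index p = some (.var i)}

/-- `free(t)`: positions of free variables. -/
def Free (t : GTerm) : Set Pos :=
  {p | ∃ i, t.index p = some (.var i) ∧ lamDepth p ≤ i}

/-- A term is closed if it has no free variables. -/
def Closed (t : GTerm) : Prop := Free t = ∅

/-- `p` is locally closed in `t`: every free variable of `t[p]` is also free in `t`. -/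
def LocallyClosed (t : GTerm) (p : Pos) : Prop :=
  p ∈ Valid t ∧ ∀ u, t.index p = some u → ∀ q ∈ Free u, p ++ q ∈ Free t

/-- Subtract `d0` from every free variable (`d` is the current binder depth). -/
def declift (d0 : ℕ) : GTerm → ℕ → GTerm
  | .var j, d => if d ≤ j then .var (j - d0) else .var j
  | .app a b, d => .app (declift d0 a d) (declift d0 b d)
  | .lam a, d => .lam (declift d0 a (d + 1))
  | .gvar a, _ => .gvar a

/-- The lift `⟨t⟩p`: equal to `t[p]` except every free variable of `t[p]` is
decremented by `|p|_λ`. -/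
def liftAt (t : GTerm) (p : Pos) : Option GTerm :=
  (t.index p).map (fun u => declift (lamDepth p) u 0)

/-- Transition labels: ↓, ↙, ↘ and ↑. -/
inductive Lab : Type
  | down | left | right | up
  deriving DecidableEq

def Lab.ofDir : Dir → Lab
  | .down => .down
  | .left => .left
  | .right => .right

/-- Transitions between term nodes. -/
inductive Trans : GTerm × Pos → Lab → GTerm × Pos → Prop
  | dir (t : GTerm) (p : Pos) (x : Dir) :
      (p ++ [x]) ∈ Valid t → Trans (t, p) (Lab.ofDir x) (t, p ++ [x])
  | up (t : GTerm) (q r : Pos) :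
      t.index (q ++ Dir.down :: r) = some (.var (lamDepth r)) →
      Trans (t, q ++ Dir.down :: r) Lab.up (t, q)

/-- `R` is a bisimulation. -/
def IsBisim (R : GTerm × Pos → GTerm × Pos → Prop) : Prop :=
  ∀ n₁ n₂, R n₁ n₂ → ∀ x : Lab,
    (∀ n₁', Trans n₁ x n₁' → ∃ n₂', Trans n₂ x n₂' ∧ R n₁' n₂') ∧
    (∀ n₂', Trans n₂ x n₂' → ∃ n₁', Trans n₁ x n₁' ∧ R n₁' n₂')

/-- Two nodes are bisimilar when some bisimulation relates them. -/
def Bisim (n₁ n₂ : GTerm × Pos) : Prop := ∃ R, IsBisim R ∧ R n₁ n₂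

/-- `(t, p)` is a term node: `t` is closed and `p ∈ valid(t)`. -/
def IsNode (t : GTerm) (p : Pos) : Prop := Closed t ∧ p ∈ Valid t

/-- A single fork between term nodes (let-abs rule or closed rule). -/
def SingleFork (n₁ n₂ : GTerm × Pos) : Prop :=
  (∃ t p q₁ q₂ r u,
      n₁ = (t, p ++ q₁ ++ r) ∧ n₂ = (t, p ++ q₂ ++ r) ∧
      IsNode t (p ++ q₁ ++ r) ∧ IsNode t (p ++ q₂ ++ r) ∧
      t.index p = some u ∧ LocallyClosed u q₁ ∧ liftAt u q₁ = liftAt u q₂) ∨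
  (∃ t₁ t₂ p₁ p₂ r u,
      n₁ = (t₁, p₁ ++ r) ∧ n₂ = (t₂, p₂ ++ r) ∧
      IsNode t₁ (p₁ ++ r) ∧ IsNode t₂ (p₂ ++ r) ∧
      t₁.index p₁ = some u ∧ Closed u ∧ t₂.index p₂ = some u)

/-- Fork equivalence: the transitive closure of single forks. -/
def ForkEquiv : GTerm × Pos → GTerm × Pos → Prop := Relation.TransGen SingleFork

/-- Shift free variables ≥ `c` up by `d`. -/
def shiftAux (c d : ℕ) : GTerm → GTerm
  | .var j => if j < c then .var j else .var (j + d)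
  | .app a b => .app (shiftAux c d a) (shiftAux c d b)
  | .lam a => .lam (shiftAux (c + 1) d a)
  | .gvar a => .gvar a

/-- Capture-avoiding substitution of free variable `i` by `u` (at current depth `d`). -/
def substAux (i : ℕ) (u : GTerm) : ℕ → GTerm → GTerm
  | d, .var j => if j = i + d then shiftAux 0 d u else .var j
  | d, .app a b => .app (substAux i u d a) (substAux i u d b)
  | d, .lam a => .lam (substAux i u (d + 1) a)
  | _, .gvar a => .gvar a

/-- `t[i := u]`: capture-avoiding substitution of variable `i` by `u` in `t`. -/
def subst (i : ℕ) (u : GTerm) (t : GTerm) : GTerm := substAux i u 0 t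

/-- Simultaneous capture-avoiding substitution of variable `i` by `σᵢ`
(at current depth `d`). -/
def msubstAux (σ : List GTerm) : ℕ → GTerm → GTerm
  | d, .var j =>
      if j < d then .var j else shiftAux 0 d (σ.getD (j - d) (.var (j - d)))
  | d, .app a b => .app (msubstAux σ d a) (msubstAux σ d b)
  | d, .lam a => .lam (msubstAux σ (d + 1) a)
  | _, .gvar a => .gvar a

/-- `tσ`: simultaneous substitution of each variable `i` by the `i`-th element of `σ`. -/
def msubst (σ : List GTerm) (t : GTerm) : GTerm := msubstAux σ 0 t

/-- Term size (the term summary `|t|`); global variables count as leaves. -/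
def gsize : GTerm → ℕ
  | .var _ => 1
  | .gvar _ => 1
  | .app a b => gsize a + gsize b + 1
  | .lam a => gsize a + 1

theorem gsize_shiftAux (c d : ℕ) (t : GTerm) : gsize (shiftAux c d t) = gsize t := by
  induction t generalizing c with
  | var j => simp only [shiftAux]; split <;> rfl
  | app a b iha ihb => simp [shiftAux, gsize, iha, ihb]
  | lam a ih => simp [shiftAux, gsize, ih]
  | gvar a => rfl

theorem gsize_substAux_gvar (i : ℕ) (w : GTerm) (d : ℕ) (t : GTerm) :
    gsize (substAux i (.gvar w) d t) = gsize t := by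
  induction t generalizing d with
  | var j => simp only [substAux]; split <;> rfl
  | app a b iha ihb => simp [substAux, gsize, iha, ihb]
  | lam a ih => simp [substAux, gsize, ih]
  | gvar a => rfl

theorem gsize_msubstAux (σ : List GTerm) (h : ∀ u ∈ σ, ∃ w, u = .gvar w)
    (d : ℕ) (t : GTerm) : gsize (msubstAux σ d t) = gsize t := by
  induction t generalizing d with
  | var j =>
    simp only [msubstAux]
    split
    · rfl
    · rw [gsize_shiftAux]
      rcases Nat.lt_or_ge (j - d) σ.length with hl | hl
      · rw [List.getD_eq_getElem _ _ hl]
        obtain ⟨w, hw⟩ := h _ (List.getElem_mem hl)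
        rw [hw]; rfl
      · rw [List.getD_eq_default _ _ hl]; rfl
  | app a b iha ihb => simp [msubstAux, gsize, iha, ihb]
  | lam a ih => simp [msubstAux, gsize, ih]
  | gvar a => rfl

theorem gsize_msubst (σ : List GTerm) (h : ∀ u ∈ σ, ∃ w, u = .gvar w)
    (t : GTerm) : gsize (msubst σ t) = gsize t :=
  gsize_msubstAux σ h 0 t

/-- The naive globalization procedure. -/
def globalizeNaive : GTerm → GTerm
  | .lam t => .lam (globalizeNaive (subst 0 (.gvar (.lam t)) t))
  | .app t u => .app (globalizeNaive t) (globalizeNaive u)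
  | .gvar t => .gvar t
  | .var i => .var i
termination_by t => gsize t
decreasing_by
  · simp only [subst, gsize_substAux_gvar, gsize]; omega
  · simp only [gsize]; omega
  · simp only [gsize]; omega

/-- The strongly connected component of a closed g-term: positions all of whose
nonempty prefixes index open terms. -/
def SCC (t : GTerm) : Set Pos :=
  {p | p ∈ Valid t ∧ ∀ p' u, p' ≠ [] → p' <+: p → t.index p' = some u → ¬ Closed u}

/-- `duplicates(t)`: strict subterms in the SCC of `t` whose term summary (size)
is not unique within the SCC. -/
def duplicates (t : GTerm) : Set GTerm :=
  {u | ∃ p q v, p ∈ SCC t ∧ q ∈ SCC t ∧ p ≠ [] ∧ q ≠ [] ∧ p ≠ q ∧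
      t.index p = some u ∧ t.index q = some v ∧ gsize u = gsize v}

open Classical in
mutual
/-- Efficient globalization. -/
noncomputable def globalize (r : GTerm) : GTerm :=
  globalizeScc r [] (by simp) r
termination_by (gsize r, 2)
decreasing_by
  apply Prod.Lex.right; omega

noncomputable def globalizeScc (r : GTerm) (σ : List GTerm)
    (h : ∀ u ∈ σ, ∃ w, u = GTerm.gvar w) : GTerm → GTerm
  | .lam t => .lam (globalizeStep r (.gvar (.app r t) :: σ)
      (by
        intro u hu
        rcases List.mem_cons.mp hu with h' | h'
        · exact ⟨_, h'⟩
        · exact h u h') t)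
  | .app t u => .app (globalizeStep r σ h t) (globalizeStep r σ h u)
  | .gvar t => .gvar t
  | .var i => msubst σ (.var i)
termination_by t => (gsize t, 1)
decreasing_by
  · apply Prod.Lex.left; simp only [gsize]; omega
  · apply Prod.Lex.left; simp only [gsize]; omega
  · apply Prod.Lex.left; simp only [gsize]; omega

noncomputable def globalizeStep (r : GTerm) (σ : List GTerm)
    (h : ∀ u ∈ σ, ∃ w, u = GTerm.gvar w) (t : GTerm) : GTerm :=
  if Closed t ∨ t ∈ duplicates r then globalize (msubst σ t)
  else globalizeScc r σ h t
termination_by (gsize t, 3)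
decreasing_by
  · rw [gsize_msubst σ h]; apply Prod.Lex.right; omega
  · apply Prod.Lex.right; omega
end



/-! ### Basic index lemmas -/

@[simp] lemma index_nil (t : GTerm) : t.index [] = some t := by cases t <;> rfl
@[simp] lemma index_var (i : ℕ) (x : Dir) (p : Pos) :
    (GTerm.var i).index (x :: p) = none := by cases x <;> rfl
@[simp] lemma index_gvar_cons (w : GTerm) (x : Dir) (p : Pos) :
    (GTerm.gvar w).index (x :: p) = none := by cases x <;> rfl
@[simp] lemma index_app_left (a b : GTerm) (p : Pos) :
    (GTerm.app a b).index (.left :: p) = a.index p := rfl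
@[simp] lemma index_app_right (a b : GTerm) (p : Pos) :
    (GTerm.app a b).index (.right :: p) = b.index p := rfl
@[simp] lemma index_app_down (a b : GTerm) (p : Pos) :
    (GTerm.app a b).index (.down :: p) = none := rfl
@[simp] lemma index_lam_down (a : GTerm) (p : Pos) :
    (GTerm.lam a).index (.down :: p) = a.index p := rfl
@[simp] lemma index_lam_left (a : GTerm) (p : Pos) :
    (GTerm.lam a).index (.left :: p) = none := rfl
@[simp] lemma index_lam_right (a : GTerm) (p : Pos) :
    (GTerm.lam a).index (.right :: p) = none := rfl

@[simp] lemma lamDepth_nil : lamDepth ([] : Pos) = 0 := rfl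
@[simp] lemma lamDepth_down (p : Pos) : lamDepth (.down :: p) = lamDepth p + 1 := by
  simp [lamDepth, List.count_cons]
@[simp] lemma lamDepth_left (p : Pos) : lamDepth (.left :: p) = lamDepth p := by
  simp [lamDepth, List.count_cons]
@[simp] lemma lamDepth_right (p : Pos) : lamDepth (.right :: p) = lamDepth p := by
  simp [lamDepth, List.count_cons]

lemma gsize_pos (t : GTerm) : 0 < gsize t := by cases t <;> simp only [gsize] <;> omega

/-! ### ClosedAt -/

def ClosedAt : GTerm → ℕ → Prop
  | .var j, d => j < d
  | .app a b, d => ClosedAt a d ∧ ClosedAt b d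
  | .lam a, d => ClosedAt a (d + 1)
  | .gvar _, _ => True

lemma closedAt_mono : ∀ (t : GTerm) (d e : ℕ), ClosedAt t d → d ≤ e → ClosedAt t e := by
  intro t
  induction t with
  | var j => intro d e h hde; exact lt_of_lt_of_le h hde
  | app a b iha ihb => intro d e h hde; exact ⟨iha d e h.1 hde, ihb d e h.2 hde⟩
  | lam a iha => intro d e h hde; exact iha (d+1) (e+1) h (by omega)
  | gvar w => intro _ _ _ _; trivial

lemma closedAt_of_forall : ∀ (t : GTerm) (d : ℕ),
    (∀ p i, t.index p = some (.var i) → i < lamDepth p + d) → ClosedAt t d := by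
  intro t
  induction t with
  | var j =>
    intro d h
    have := h [] j (index_nil _)
    simpa [ClosedAt] using this
  | app a b iha ihb =>
    intro d h
    exact ⟨iha d (fun p i hp => by simpa using h (.left :: p) i (by simpa using hp)),
           ihb d (fun p i hp => by simpa using h (.right :: p) i (by simpa using hp))⟩
  | lam a iha =>
    intro d h
    show ClosedAt a (d + 1)
    exact iha (d+1) (fun p i hp => by
      have := h (.down :: p) i (by simpa using hp)
      simp at this; omega)
  | gvar w => intro _ _; trivial

lemma closedAt_zero_of_closed (t : GTerm) (h : Closed t) : ClosedAt t 0 := by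
  apply closedAt_of_forall
  intro p i hp
  by_contra hc
  push_neg at hc
  have hmem : p ∈ Free t := ⟨i, hp, by omega⟩
  rw [Closed] at h
  rw [h] at hmem
  exact hmem

/-! ### msubst lemmas -/

lemma msubstAux_closedAt (σ : List GTerm) : ∀ (t : GTerm) (d : ℕ),
    ClosedAt t d → msubstAux σ d t = t := by
  intro t
  induction t with
  | var j => intro d h; simp only [ClosedAt] at h; simp only [msubstAux]; rw [if_pos h]
  | app a b iha ihb => intro d h; simp only [msubstAux]; rw [iha d h.1, ihb d h.2]
  | lam a iha => intro d h; simp only [msubstAux]; rw [iha (d+1) h]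
  | gvar w => intro _ _; rfl

@[simp] lemma shiftAux_var (c d j : ℕ) :
    shiftAux c d (.var j) = if j < c then .var j else .var (j + d) := rfl
@[simp] lemma shiftAux_gvar (c d : ℕ) (w : GTerm) : shiftAux c d (.gvar w) = .gvar w := rfl

lemma msubstAux_nil : ∀ (t : GTerm) (d : ℕ), msubstAux [] d t = t := by
  intro t
  induction t with
  | var j =>
    intro d
    simp only [msubstAux]
    split
    · rfl
    · rename_i h
      rw [List.getD_nil, shiftAux_var, if_neg (by omega)]
      congr 1
      omega
  | app a b iha ihb => intro d; simp only [msubstAux]; rw [iha, ihb]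
  | lam a iha => intro d; simp only [msubstAux]; rw [iha]
  | gvar w => intro _; rfl

lemma index_msubstAux (σ : List GTerm) : ∀ (p : Pos) (t u : GTerm) (d : ℕ),
    t.index p = some u →
    (msubstAux σ d t).index p = some (msubstAux σ (d + lamDepth p) u) := by
  intro p
  induction p with
  | nil =>
    intro t u d hp
    rw [index_nil] at hp
    injection hp with h
    subst h
    simp
  | cons x p ih =>
    intro t u d hp
    cases t with
    | var j => simp at hp
    | gvar w => simp at hp
    | app a b =>
      cases x with
      | down => simp at hp
      | left =>
        simp only [index_app_left] at hp
        simp only [msubstAux, index_app_left, lamDepth_left]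
        exact ih a u d hp
      | right =>
        simp only [index_app_right] at hp
        simp only [msubstAux, index_app_right, lamDepth_right]
        exact ih b u d hp
    | lam a =>
      cases x with
      | left => simp at hp
      | right => simp at hp
      | down =>
        simp only [index_lam_down] at hp
        simp only [msubstAux, index_lam_down, lamDepth_down]
        have := ih a u (d+1) hp
        rw [show d + (lamDepth p + 1) = d + 1 + lamDepth p by omega]
        exact this



/-! ### σ-irrelevance -/

lemma shift_getD (σ : List GTerm) (hσ : ∀ u ∈ σ, ∃ w, u = GTerm.gvar w) (m k : ℕ)
    (dflt : GTerm) :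
    shiftAux 0 m (σ.getD k dflt) =
      if k < σ.length then σ.getD k dflt else shiftAux 0 m dflt := by
  split_ifs with hk
  · rw [List.getD_eq_getElem σ _ hk]
    obtain ⟨w, hw⟩ := hσ _ (List.getElem_mem hk)
    rw [hw, shiftAux_gvar]
  · rw [List.getD_eq_default _ _ (le_of_not_gt hk)]

lemma cons_msubstAux_eq (r e : GTerm) (he : ∃ w, e = GTerm.gvar w) (σ₁ σ₂ : List GTerm)
    (h₁ : ∀ u ∈ σ₁, ∃ w, u = GTerm.gvar w) (h₂ : ∀ u ∈ σ₂, ∃ w, u = GTerm.gvar w) :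
    ∀ (t : GTerm) (d : ℕ), msubstAux σ₁ (d+1) t = msubstAux σ₂ (d+1) t →
      msubstAux (e :: σ₁) d t = msubstAux (e :: σ₂) d t := by
  intro t
  induction t with
  | var j =>
    intro d h
    simp only [msubstAux] at h ⊢
    rcases lt_trichotomy j d with hj | hj | hj
    · rw [if_pos hj, if_pos hj]
    · subst hj
      rw [if_neg (by omega), if_neg (by omega)]
      rw [Nat.sub_self]
      rfl
    · rw [if_neg (by omega), if_neg (by omega)] at h ⊢
      obtain ⟨k, rfl⟩ : ∃ k, j = d + 1 + k := ⟨j - d - 1, by omega⟩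
      rw [show d + 1 + k - d = k + 1 by omega]
      rw [show d + 1 + k - (d + 1) = k by omega] at h
      rw [List.getD_cons_succ, List.getD_cons_succ]
      rw [shift_getD σ₁ h₁, shift_getD σ₂ h₂] at h ⊢
      by_cases c₁ : k < σ₁.length <;> by_cases c₂ : k < σ₂.length
      · rw [if_pos c₁, if_pos c₂] at h ⊢
        rw [List.getD_eq_getElem σ₁ _ c₁, List.getD_eq_getElem σ₂ _ c₂] at h ⊢
        exact h
      · rw [if_pos c₁, if_neg c₂] at h ⊢
        obtain ⟨w, hw⟩ := h₁ _ (List.getD_eq_getElem σ₁ _ c₁ ▸ List.getElem_mem c₁)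
        rw [hw] at h; simp at h
      · rw [if_neg c₁, if_pos c₂] at h ⊢
        obtain ⟨w, hw⟩ := h₂ _ (List.getD_eq_getElem σ₂ _ c₂ ▸ List.getElem_mem c₂)
        rw [hw] at h; simp at h
      · rw [if_neg c₁, if_neg c₂]
  | app a b iha ihb =>
    intro d h
    simp only [msubstAux] at h ⊢
    injection h with ha hb
    rw [iha d ha, ihb d hb]
  | lam a iha =>
    intro d h
    simp only [msubstAux] at h ⊢
    injection h with ha
    rw [iha (d+1) ha]
  | gvar w => intro _ _; rfl

lemma irr (r : GTerm) : ∀ (t : GTerm) (σ₁ σ₂ : List GTerm)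
    (h₁ : ∀ u ∈ σ₁, ∃ w, u = GTerm.gvar w) (h₂ : ∀ u ∈ σ₂, ∃ w, u = GTerm.gvar w),
    msubst σ₁ t = msubst σ₂ t →
    globalizeScc r σ₁ h₁ t = globalizeScc r σ₂ h₂ t ∧
    globalizeStep r σ₁ h₁ t = globalizeStep r σ₂ h₂ t := by
  intro t
  induction t with
  | var i =>
    intro σ₁ σ₂ h₁ h₂ h
    have hscc : globalizeScc r σ₁ h₁ (.var i) = globalizeScc r σ₂ h₂ (.var i) := by
      rw [globalizeScc, globalizeScc]; exact h
    refine ⟨hscc, ?_⟩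
    rw [globalizeStep, globalizeStep]
    by_cases hc : Closed (GTerm.var i) ∨ (GTerm.var i) ∈ duplicates r
    · rw [if_pos hc, if_pos hc, h]
    · rw [if_neg hc, if_neg hc]; exact hscc
  | gvar w =>
    intro σ₁ σ₂ h₁ h₂ h
    have hscc : globalizeScc r σ₁ h₁ (.gvar w) = globalizeScc r σ₂ h₂ (.gvar w) := by
      rw [globalizeScc, globalizeScc]
    refine ⟨hscc, ?_⟩
    rw [globalizeStep, globalizeStep]
    by_cases hc : Closed (GTerm.gvar w) ∨ (GTerm.gvar w) ∈ duplicates r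
    · rw [if_pos hc, if_pos hc, h]
    · rw [if_neg hc, if_neg hc]; exact hscc
  | app a b iha ihb =>
    intro σ₁ σ₂ h₁ h₂ h
    have h' := h
    simp only [msubst, msubstAux] at h'
    injection h' with ha hb
    have hscc : globalizeScc r σ₁ h₁ (.app a b) = globalizeScc r σ₂ h₂ (.app a b) := by
      rw [globalizeScc, globalizeScc,
        (iha σ₁ σ₂ h₁ h₂ ha).2, (ihb σ₁ σ₂ h₁ h₂ hb).2]
    refine ⟨hscc, ?_⟩
    rw [globalizeStep, globalizeStep]
    by_cases hc : Closed (GTerm.app a b) ∨ (GTerm.app a b) ∈ duplicates r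
    · rw [if_pos hc, if_pos hc, h]
    · rw [if_neg hc, if_neg hc]; exact hscc
  | lam a iha =>
    intro σ₁ σ₂ h₁ h₂ h
    have h' := h
    simp only [msubst, msubstAux] at h'
    injection h' with ha
    have ha' := cons_msubstAux_eq r (.gvar (.app r a)) ⟨_, rfl⟩ σ₁ σ₂ h₁ h₂ a 0 ha
    have hscc : globalizeScc r σ₁ h₁ (.lam a) = globalizeScc r σ₂ h₂ (.lam a) := by
      rw [globalizeScc, globalizeScc]
      congr 1
      exact (iha _ _ _ _ ha').2
    refine ⟨hscc, ?_⟩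
    rw [globalizeStep, globalizeStep]
    by_cases hc : Closed (GTerm.lam a) ∨ (GTerm.lam a) ∈ duplicates r
    · rw [if_pos hc, if_pos hc, h]
    · rw [if_neg hc, if_neg hc]; exact hscc

/-! ### SCC facts -/

lemma scc_nil (t : GTerm) : ([] : Pos) ∈ SCC t := by
  refine ⟨?_, ?_⟩
  · show (t.index []).isSome
    rw [index_nil]; rfl
  · intro p' u hne hpre _
    exact absurd (List.prefix_nil.mp hpre) hne

lemma closed_occ_eq {r t : GTerm} (h : ∃ q ∈ SCC r, r.index q = some t)
    (hc : Closed t) : r = t := by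
  obtain ⟨q, hq, hidx⟩ := h
  cases q with
  | nil => rw [index_nil] at hidx; exact Option.some.inj hidx
  | cons x q =>
    exact absurd hc (hq.2 (x :: q) t (by simp) (List.prefix_refl _) hidx)

/-! ### Main lemma -/

lemma mainS : ∀ (n : ℕ) (t : GTerm), gsize t ≤ n →
    ∀ (r : GTerm) (σ : List GTerm) (hσ : ∀ u ∈ σ, ∃ w, u = GTerm.gvar w),
    (Closed t → ∃ q ∈ SCC r, r.index q = some t) →
    ∀ (p : Pos) (u : GTerm), t.index p = some u → Closed u →
    (globalizeScc r σ hσ t).index p = some (globalize u) := by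
  intro n
  induction n with
  | zero => intro t ht; exact absurd ht (by have := gsize_pos t; omega)
  | succ n ih =>
    intro t ht r σ hσ hCt p u hp hu
    -- derived statements at level n
    have G_n : ∀ (s : GTerm), gsize s ≤ n → ∀ (p : Pos) (u : GTerm),
        s.index p = some u → Closed u →
        (globalize s).index p = some (globalize u) := by
      intro s hs p u hp hu
      rw [globalize]
      exact ih s hs s [] _ (fun _ => ⟨[], scc_nil s, index_nil s⟩) p u hp hu
    have T_n : ∀ (s : GTerm), gsize s ≤ n →
        ∀ (r : GTerm) (σ : List GTerm) (hσ : ∀ u ∈ σ, ∃ w, u = GTerm.gvar w)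
        (p : Pos) (u : GTerm), s.index p = some u → Closed u →
        (globalizeStep r σ hσ s).index p = some (globalize u) := by
      intro s hs r σ hσ p u hp hu
      rw [globalizeStep]
      split_ifs with hcd
      · apply G_n (msubst σ s) (by rw [gsize_msubst σ hσ]; exact hs) p u _ hu
        have h1 := index_msubstAux σ p s u 0 hp
        rwa [msubstAux_closedAt σ u _
          (closedAt_mono u 0 _ (closedAt_zero_of_closed u hu) (Nat.zero_le _))] at h1
      · push_neg at hcd
        exact ih s hs r σ hσ (fun hc => absurd hc hcd.1) p u hp hu
    -- main case analysis
    cases p with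
    | nil =>
      rw [index_nil] at hp
      injection hp with hp
      subst hp
      have hrt : r = t := closed_occ_eq (hCt hu) hu
      subst hrt
      rw [index_nil]
      congr 1
      rw [globalize]
      exact (irr r r σ [] hσ (by simp)
        (by rw [show msubst σ r = r from
              msubstAux_closedAt σ r 0 (closedAt_zero_of_closed r hu)]
            rw [show msubst [] r = r from msubstAux_nil r 0])).1
    | cons x p =>
      cases t with
      | var i => simp at hp
      | gvar w => simp at hp
      | app a b =>
        have hsz : gsize a ≤ n ∧ gsize b ≤ n := by
          simp only [gsize] at ht; constructor <;> omega
        cases x with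
        | down => simp at hp
        | left =>
          simp only [index_app_left] at hp
          rw [globalizeScc, index_app_left]
          exact T_n a hsz.1 r σ hσ p u hp hu
        | right =>
          simp only [index_app_right] at hp
          rw [globalizeScc, index_app_right]
          exact T_n b hsz.2 r σ hσ p u hp hu
      | lam a =>
        have hsz : gsize a ≤ n := by simp only [gsize] at ht; omega
        cases x with
        | left => simp at hp
        | right => simp at hp
        | down =>
          simp only [index_lam_down] at hp
          rw [globalizeScc, index_lam_down]
          exact T_n a hsz r _ _ p u hp hu

lemma mainG (t : GTerm) (p : Pos) (u : GTerm) (hp : t.index p = some u)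
    (hu : Closed u) : (globalize t).index p = some (globalize u) := by
  rw [globalize]
  exact mainS (gsize t) t le_rfl t [] _ (fun _ => ⟨[], scc_nil t, index_nil t⟩) p u hp hu

lemma mainT (r : GTerm) (σ : List GTerm) (hσ : ∀ u ∈ σ, ∃ w, u = GTerm.gvar w)
    (t : GTerm) (p : Pos) (u : GTerm) (hp : t.index p = some u) (hu : Closed u) :
    (globalizeStep r σ hσ t).index p = some (globalize u) := by
  rw [globalizeStep]
  split_ifs with hcd
  · apply mainG (msubst σ t) p u _ hu
    have h1 := index_msubstAux σ p t u 0 hp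
    rwa [msubstAux_closedAt σ u _
      (closedAt_mono u 0 _ (closedAt_zero_of_closed u hu) (Nat.zero_le _))] at h1
  · push_neg at hcd
    exact mainS (gsize t) t le_rfl r σ hσ (fun hc => absurd hc hcd.1) p u hp hu

/-- the context around a closed subterm does not influence
globalization. -/
theorem globalize_closed_subterm (t : GTerm) (p : Pos) (u : GTerm)
    (hp : t.index p = some u) (hu : Closed u)
    (r : GTerm) (σ : List GTerm) (hσ : ∀ v ∈ σ, ∃ w, v = GTerm.gvar w)
    (hr : Closed r) (htσ : Closed (msubst σ t))
    (hocc : ∃ q ∈ SCC r, r.index q = some t) :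
    (globalize t).index p = (globalizeScc r σ hσ t).index p ∧
    (globalizeScc r σ hσ t).index p = (globalizeStep r σ hσ t).index p ∧
    (globalizeStep r σ hσ t).index p = some (globalize u) := by
  have h2 := mainS (gsize t) t le_rfl r σ hσ (fun _ => hocc) p u hp hu
  have h3 := mainT r σ hσ t p u hp hu
  have h1 := mainG t p u hp hu
  exact ⟨by rw [h1, h2], by rw [h2, h3], h3⟩

end HashAlpha
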